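/- arXiv:2206.12365 — 5 statements merged into one kernel-verified Lean document; each statement's English description precedes it below -/
import Mathlib

section
/- For every integer J ≥ 2, the Mallows normalizing function ψ is strictly convex on the interval (0, ∞). -/
open Finset Real Polynomial

private lemma aux_sum_convexOn {ι : Type*} (t : Finset ι) {s : Set ℝ} (hs : Convex ℝ s)
    {f : ι → ℝ → ℝ} (h : ∀ i ∈ t, ConvexOn ℝ s (f i)) :
    ConvexOn ℝ s (fun x => ∑ i ∈ t, f i x) := by
  classical
  induction t using Finset.induction with
  | empty => simpa using convexOn_const 0 hs
  | insert _ _ hi ih =>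
    simp only [Finset.sum_insert hi]
    exact (h _ (mem_insert_self _ _)).add (ih fun i hit => h i (mem_insert_of_mem hit))

private lemma aux_exp_convexOn (m : ℕ) :
    ConvexOn ℝ Set.univ (fun θ : ℝ => Real.exp ((m : ℝ) * -θ)) := by
  refine ⟨convex_univ, fun x _ y _ a b ha hb hab => ?_⟩
  have := convexOn_exp.2 (Set.mem_univ ((m:ℝ) * -x)) (Set.mem_univ ((m:ℝ) * -y)) ha hb hab
  simp only [smul_eq_mul] at this ⊢
  calc Real.exp ((m:ℝ) * -(a*x+b*y)) = Real.exp (a*((m:ℝ)*-x)+b*((m:ℝ)*-y)) := by ring_nf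
  _ ≤ _ := this

private lemma aux_strict {c : ℝ} (hc : 0 < c) :
    StrictConvexOn ℝ Set.univ (fun θ : ℝ => c * Real.exp ((1:ℝ) * -θ)) := by
  refine ⟨convex_univ, fun x _ y _ hxy a b ha hb hab => ?_⟩
  have hne : (1:ℝ) * -x ≠ (1:ℝ) * -y := by simpa using fun h => hxy (neg_injective h)
  have := strictConvexOn_exp.2 (Set.mem_univ ((1:ℝ) * -x)) (Set.mem_univ ((1:ℝ) * -y)) hne ha hb hab
  simp only [smul_eq_mul] at this ⊢
  have h2 : Real.exp ((1:ℝ) * -(a*x+b*y)) = Real.exp (a*((1:ℝ)*-x)+b*((1:ℝ)*-y)) := by ring_nf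
  rw [h2]
  nlinarith [this, hc]

private lemma aux_coeff_nonneg (t : Finset ℕ) (n : ℕ) :
    0 ≤ (∏ j ∈ t, ∑ k ∈ Finset.range j, (Polynomial.X : Polynomial ℝ) ^ k).coeff n := by
  classical
  induction t using Finset.induction generalizing n with
  | empty => simp [Polynomial.coeff_one]; positivity
  | insert _ _ hi ih =>
    rw [Finset.prod_insert hi, Polynomial.coeff_mul]
    refine Finset.sum_nonneg fun p _ => mul_nonneg ?_ (ih _)
    simp [Polynomial.finset_sum_coeff, Polynomial.coeff_X_pow]
    positivity

private lemma aux_eval_zero (j : ℕ) (hj : 1 ≤ j) :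
    (∑ k ∈ Finset.range j, (Polynomial.X : Polynomial ℝ) ^ k).eval 0 = 1 := by
  have : ¬ j = 0 := by omega
  simp [Polynomial.eval_finset_sum, zero_pow_eq, Finset.sum_ite_eq' (Finset.range j) 0, this]

private lemma aux_geom (θ : ℝ) (hθ : 0 < θ) (j : ℕ) :
    (1 - Real.exp (-(j : ℝ) * θ)) / (1 - Real.exp (-θ))
      = ∑ k ∈ Finset.range j, Real.exp (-θ) ^ k := by
  have hx : Real.exp (-θ) ≠ 1 := by
    intro h
    rw [Real.exp_eq_one_iff] at h
    linarith
  rw [geom_sum_eq hx, ← Real.exp_nat_mul]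
  have h1 : (1:ℝ) - Real.exp (-θ) ≠ 0 := sub_ne_zero.2 (Ne.symm hx)
  have h2 : Real.exp (-θ) - 1 ≠ 0 := sub_ne_zero.2 hx
  field_simp
  ring

/-- The Mallows normalizing function
`ψ(θ) = ∏_{j=1}^J (1 − e^{−jθ})/(1 − e^{−θ})`. -/
noncomputable def mallowsPsi (J : ℕ) (θ : ℝ) : ℝ :=
  ∏ j ∈ Finset.Icc 1 J, (1 - Real.exp (-(j : ℝ) * θ)) / (1 - Real.exp (-θ))

theorem mallowsPsi_strictConvexOn (J : ℕ) (hJ : 2 ≤ J) :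
    StrictConvexOn ℝ (Set.Ioi (0 : ℝ)) (mallowsPsi J) := by
  classical
  set P : Polynomial ℝ := ∏ j ∈ Finset.Icc 1 J, ∑ k ∈ Finset.range j, Polynomial.X ^ k with hP
  set N : ℕ := P.natDegree with hN
  set F : ℝ → ℝ := fun θ => ∑ m ∈ Finset.range (N + 1), P.coeff m * Real.exp ((m : ℝ) * -θ)
    with hF
  -- F agrees with mallowsPsi on Ioi 0
  have hEq : Set.EqOn F (mallowsPsi J) (Set.Ioi 0) := by
    intro θ hθ
    have hθ' : (0:ℝ) < θ := hθ
    have h1 : mallowsPsi J θ = P.eval (Real.exp (-θ)) := by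
      rw [mallowsPsi, hP, Polynomial.eval_prod]
      refine Finset.prod_congr rfl fun j _ => ?_
      rw [aux_geom θ hθ' j]
      simp [Polynomial.eval_finset_sum]
    rw [h1, Polynomial.eval_eq_sum_range, hF]
    refine Finset.sum_congr rfl fun m _ => ?_
    rw [← Real.exp_nat_mul]
  -- coeff 1 of P is at least 1
  have h2mem : 2 ∈ Finset.Icc 1 J := by
    simp only [Finset.mem_Icc]
    omega
  have hc1 : (1:ℝ) ≤ P.coeff 1 := by
    rw [hP, ← Finset.mul_prod_erase _ _ h2mem]
    set Q : Polynomial ℝ :=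
      ∏ j ∈ (Finset.Icc 1 J).erase 2, ∑ k ∈ Finset.range j, (Polynomial.X : Polynomial ℝ) ^ k
      with hQ
    have hfac : (∑ k ∈ Finset.range 2, (Polynomial.X : Polynomial ℝ) ^ k) = 1 + Polynomial.X := by
      simp [Finset.sum_range_succ]
    rw [hfac, add_mul, one_mul, Polynomial.coeff_add, Polynomial.coeff_X_mul]
    have hQ0 : Q.coeff 0 = 1 := by
      rw [Polynomial.coeff_zero_eq_eval_zero, hQ, Polynomial.eval_prod]
      refine Finset.prod_eq_one fun j hj => ?_
      exact aux_eval_zero j (Finset.mem_Icc.mp (Finset.mem_of_mem_erase hj)).1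
    have hQ1 : 0 ≤ Q.coeff 1 := aux_coeff_nonneg _ 1
    rw [hQ0]
    linarith
  have hc1pos : (0:ℝ) < P.coeff 1 := by linarith
  -- 1 is in the range of summation
  have h1le : 1 ≤ N := Polynomial.le_natDegree_of_ne_zero (by positivity)
  have h1mem : 1 ∈ Finset.range (N + 1) := Finset.mem_range.mpr (by omega)
  -- strict convexity of F
  have hFstrict : StrictConvexOn ℝ (Set.Ioi (0:ℝ)) F := by
    have hsplit : F = fun θ =>
        (P.coeff 1 * Real.exp ((1:ℝ) * -θ))
          + ∑ m ∈ (Finset.range (N + 1)).erase 1, P.coeff m * Real.exp ((m : ℝ) * -θ) := by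
      funext θ
      show ∑ m ∈ Finset.range (N + 1), P.coeff m * Real.exp ((m : ℝ) * -θ) = _
      rw [← Finset.add_sum_erase _ _ h1mem]
      norm_num
    rw [hsplit]
    refine StrictConvexOn.add_convexOn ?_ ?_
    · exact (aux_strict hc1pos).subset (Set.subset_univ _) (convex_Ioi 0)
    · refine aux_sum_convexOn _ (convex_Ioi 0) fun m _ => ?_
      have := (aux_exp_convexOn m).smul (aux_coeff_nonneg (Finset.Icc 1 J) m)
      simpa [smul_eq_mul] using this.subset (Set.subset_univ _) (convex_Ioi 0)
  exact hFstrict.congr hEq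
end

section
/- For every integer J ≥ 2, the function θ ↦ log ψ(θ) is strictly convex on the interval (0, ∞). -/
lemma nat_mul_sinh_le (n : ℕ) {x : ℝ} (hx : 0 < x) :
    (n : ℝ) * Real.sinh x ≤ Real.sinh (n * x) := by
  induction n with
  | zero => simp
  | succ k ih =>
    have h1 : Real.sinh ((k + 1 : ℕ) * x) = Real.sinh ((k : ℝ) * x + x) := by
      push_cast; ring_nf
    rw [h1, Real.sinh_add]
    have hck : 1 ≤ Real.cosh ((k : ℝ) * x) := Real.one_le_cosh _
    have hcx : 1 ≤ Real.cosh x := Real.one_le_cosh x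
    have hsk : 0 ≤ Real.sinh ((k : ℝ) * x) := by
      apply Real.sinh_nonneg_iff.2; positivity
    have hsx : 0 ≤ Real.sinh x := Real.sinh_nonneg_iff.2 hx.le
    push_cast
    nlinarith [ih]

lemma nat_mul_sinh_lt {n : ℕ} (hn : 2 ≤ n) {x : ℝ} (hx : 0 < x) :
    (n : ℝ) * Real.sinh x < Real.sinh (n * x) := by
  obtain ⟨k, rfl⟩ : ∃ k, n = k + 1 := ⟨n - 1, by omega⟩
  have hk : 1 ≤ k := by omega
  have h1 : Real.sinh ((k + 1 : ℕ) * x) = Real.sinh ((k : ℝ) * x + x) := by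
    push_cast; ring_nf
  rw [h1, Real.sinh_add]
  have hck : 1 ≤ Real.cosh ((k : ℝ) * x) := Real.one_le_cosh _
  have hcx : 1 < Real.cosh x := by
    rw [Real.one_lt_cosh]; exact hx.ne'
  have hsk : 0 < Real.sinh ((k : ℝ) * x) := by
    apply Real.sinh_pos_iff.2; positivity
  have hsx : 0 < Real.sinh x := Real.sinh_pos_iff.2 hx
  have ih := nat_mul_sinh_le k hx
  push_cast
  nlinarith

lemma G_eq {x : ℝ} (hx : 0 < x) :
    Real.exp (-x) / (1 - Real.exp (-x))^2 = 1 / (2 * Real.sinh (x/2))^2 := by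
  have h : 2 * Real.sinh (x/2) = Real.exp (x/2) - Real.exp (-(x/2)) := by
    rw [Real.sinh_eq]; ring
  have he : Real.exp (-x) = Real.exp (-(x/2)) * Real.exp (-(x/2)) := by
    rw [← Real.exp_add]; ring_nf
  have h2 : 1 - Real.exp (-x) = Real.exp (-(x/2)) * (Real.exp (x/2) - Real.exp (-(x/2))) := by
    rw [mul_sub, ← Real.exp_add, ← Real.exp_add]; ring_nf; rw [Real.exp_zero]; ring
  have hne : Real.exp (x/2) - Real.exp (-(x/2)) ≠ 0 := by
    have : Real.exp (-(x/2)) < Real.exp (x/2) := Real.exp_lt_exp.2 (by linarith)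
    linarith
  have hpe : Real.exp (-(x/2)) ≠ 0 := (Real.exp_pos _).ne'
  set a := Real.exp (x/2)
  set b := Real.exp (-(x/2))
  rw [h, h2, he, mul_pow]
  field_simp

lemma key_le {j : ℕ} (hj : 1 ≤ j) {θ : ℝ} (hθ : 0 < θ) :
    (j:ℝ)^2 * Real.exp (-(j:ℝ)*θ) / (1 - Real.exp (-(j:ℝ)*θ))^2
      ≤ (1:ℝ)^2 * Real.exp (-(1:ℝ)*θ) / (1 - Real.exp (-(1:ℝ)*θ))^2 := by
  have hjpos : (0:ℝ) < j := by exact_mod_cast hj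
  have hx : 0 < (j:ℝ)*θ := by positivity
  have h1 := G_eq hx
  have h2 := G_eq hθ
  have hs : 0 < Real.sinh (θ/2) := Real.sinh_pos_iff.2 (by linarith)
  have hS : (j:ℝ) * Real.sinh (θ/2) ≤ Real.sinh (((j:ℝ)*θ)/2) := by
    have h := nat_mul_sinh_le j (half_pos hθ)
    have : (j:ℝ) * (θ/2) = ((j:ℝ)*θ)/2 := by ring
    rwa [this] at h
  have hS0 : 0 < Real.sinh (((j:ℝ)*θ)/2) := lt_of_lt_of_le (by positivity) hS
  have hsq : ((j:ℝ) * Real.sinh (θ/2))^2 ≤ (Real.sinh (((j:ℝ)*θ)/2))^2 :=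
    pow_le_pow_left₀ (by positivity) hS 2
  rw [mul_div_assoc, mul_div_assoc, neg_mul, h1, one_pow, one_mul, neg_one_mul, G_eq hθ]
  rw [mul_one_div, div_le_div_iff₀ (by positivity) (by positivity), one_mul]
  nlinarith [hsq]

lemma key_lt {j : ℕ} (hj : 2 ≤ j) {θ : ℝ} (hθ : 0 < θ) :
    (j:ℝ)^2 * Real.exp (-(j:ℝ)*θ) / (1 - Real.exp (-(j:ℝ)*θ))^2
      < (1:ℝ)^2 * Real.exp (-(1:ℝ)*θ) / (1 - Real.exp (-(1:ℝ)*θ))^2 := by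
  have hjpos : (0:ℝ) < j := by positivity
  have hx : 0 < (j:ℝ)*θ := by positivity
  have h1 := G_eq hx
  have hs : 0 < Real.sinh (θ/2) := Real.sinh_pos_iff.2 (by linarith)
  have hS : (j:ℝ) * Real.sinh (θ/2) < Real.sinh (((j:ℝ)*θ)/2) := by
    have h := nat_mul_sinh_lt hj (half_pos hθ)
    have : (j:ℝ) * (θ/2) = ((j:ℝ)*θ)/2 := by ring
    rwa [this] at h
  have hS0 : 0 < Real.sinh (((j:ℝ)*θ)/2) := lt_trans (by positivity) hS
  have hsq : ((j:ℝ) * Real.sinh (θ/2))^2 < (Real.sinh (((j:ℝ)*θ)/2))^2 :=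
    pow_lt_pow_left₀ hS (by positivity) (by norm_num)
  rw [mul_div_assoc, mul_div_assoc, neg_mul, h1, one_pow, one_mul, neg_one_mul, G_eq hθ]
  rw [mul_one_div, div_lt_div_iff₀ (by positivity) (by positivity), one_mul]
  nlinarith [hsq]

lemma one_sub_exp_pos {c θ : ℝ} (hc : 0 < c) (hθ : 0 < θ) :
    0 < 1 - Real.exp (-c*θ) := by
  have : Real.exp (-c*θ) < 1 := by
    rw [Real.exp_lt_one_iff]; nlinarith
  linarith

lemma hasDerivAt_F {c θ : ℝ} (hc : 0 < c) (hθ : 0 < θ) :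
    HasDerivAt (fun t => Real.log (1 - Real.exp (-c*t)))
      (c * Real.exp (-c*θ) / (1 - Real.exp (-c*θ))) θ := by
  have h1 : HasDerivAt (fun t : ℝ => -c*t) (-c) θ := by
    simpa using (hasDerivAt_id θ).const_mul (-c)
  have h2 := h1.exp
  have h3 := h2.const_sub 1
  have hne : 1 - Real.exp (-c*θ) ≠ 0 := (one_sub_exp_pos hc hθ).ne'
  have h4 := h3.log hne
  convert h4 using 1
  field_simp

lemma hasDerivAt_D {c θ : ℝ} (hc : 0 < c) (hθ : 0 < θ) :
    HasDerivAt (fun t => c * Real.exp (-c*t) / (1 - Real.exp (-c*t)))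
      (-(c^2 * Real.exp (-c*θ)) / (1 - Real.exp (-c*θ))^2) θ := by
  have h1 : HasDerivAt (fun t : ℝ => -c*t) (-c) θ := by
    simpa using (hasDerivAt_id θ).const_mul (-c)
  have h2 := h1.exp
  have hnum := h2.const_mul c
  have hden := h2.const_sub 1
  have hne : 1 - Real.exp (-c*θ) ≠ 0 := (one_sub_exp_pos hc hθ).ne'
  have h := hnum.fun_div hden hne
  refine h.congr_deriv ?_
  rw [div_eq_div_iff (by positivity) (by positivity)]
  ring

noncomputable def mg (J : ℕ) (θ : ℝ) : ℝ :=
  ∑ j ∈ Finset.Icc 1 J,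
    (Real.log (1 - Real.exp (-(j:ℝ)*θ)) - Real.log (1 - Real.exp (-(1:ℝ)*θ)))

noncomputable def mg' (J : ℕ) (θ : ℝ) : ℝ :=
  ∑ j ∈ Finset.Icc 1 J,
    ((j:ℝ) * Real.exp (-(j:ℝ)*θ) / (1 - Real.exp (-(j:ℝ)*θ))
      - (1:ℝ) * Real.exp (-(1:ℝ)*θ) / (1 - Real.exp (-(1:ℝ)*θ)))

noncomputable def mg'' (J : ℕ) (θ : ℝ) : ℝ :=
  ∑ j ∈ Finset.Icc 1 J,
    (-((j:ℝ)^2 * Real.exp (-(j:ℝ)*θ)) / (1 - Real.exp (-(j:ℝ)*θ))^2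
      - -((1:ℝ)^2 * Real.exp (-(1:ℝ)*θ)) / (1 - Real.exp (-(1:ℝ)*θ))^2)

lemma jpos {J j : ℕ} (hj : j ∈ Finset.Icc 1 J) : (0:ℝ) < j := by
  have := (Finset.mem_Icc.1 hj).1
  exact_mod_cast Nat.lt_of_lt_of_le Nat.zero_lt_one this

lemma hasDerivAt_mg (J : ℕ) {θ : ℝ} (hθ : 0 < θ) : HasDerivAt (mg J) (mg' J θ) θ :=
  HasDerivAt.fun_sum fun j hj => (hasDerivAt_F (jpos hj) hθ).fun_sub (hasDerivAt_F one_pos hθ)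

lemma hasDerivAt_mg' (J : ℕ) {θ : ℝ} (hθ : 0 < θ) : HasDerivAt (mg' J) (mg'' J θ) θ :=
  HasDerivAt.fun_sum fun j hj => (hasDerivAt_D (jpos hj) hθ).fun_sub (hasDerivAt_D one_pos hθ)

lemma mg''_pos {J : ℕ} (hJ : 2 ≤ J) {θ : ℝ} (hθ : 0 < θ) : 0 < mg'' J θ := by
  unfold mg''
  apply Finset.sum_pos'
  · intro j hj
    have h := key_le (Finset.mem_Icc.1 hj).1 hθ
    simp only [neg_div]
    linarith
  · refine ⟨2, Finset.mem_Icc.2 ⟨one_le_two, hJ⟩, ?_⟩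
    have h := key_lt (le_refl 2) hθ
    simp only [neg_div]
    push_cast at h ⊢
    linarith

lemma log_psi_eq (J : ℕ) {θ : ℝ} (hθ : 0 < θ) :
    Real.log (mallowsPsi J θ) = mg J θ := by
  unfold mallowsPsi mg
  have hb : 1 - Real.exp (-θ) ≠ 0 := by
    have := one_sub_exp_pos one_pos hθ
    rw [neg_one_mul] at this
    exact this.ne'
  rw [Real.log_prod]
  · refine Finset.sum_congr rfl fun j hj => ?_
    have ha : 1 - Real.exp (-(j:ℝ)*θ) ≠ 0 := (one_sub_exp_pos (jpos hj) hθ).ne'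
    rw [Real.log_div ha hb, neg_one_mul]
  · intro j hj
    exact div_ne_zero (one_sub_exp_pos (jpos hj) hθ).ne' hb

theorem log_mallowsPsi_strictConvexOn (J : ℕ) (hJ : 2 ≤ J) :
    StrictConvexOn ℝ (Set.Ioi (0 : ℝ)) (fun θ : ℝ => Real.log (mallowsPsi J θ)) := by
  have hconv : StrictConvexOn ℝ (Set.Ioi (0:ℝ)) (mg J) := by
    apply strictConvexOn_of_deriv2_pos (convex_Ioi 0)
    · intro x hx
      exact (hasDerivAt_mg J hx).continuousAt.continuousWithinAt
    · intro x hx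
      rw [interior_Ioi] at hx
      have hEq : deriv (mg J) =ᶠ[nhds x] mg' J := by
        filter_upwards [isOpen_Ioi.mem_nhds hx] with y hy
        exact (hasDerivAt_mg J hy).deriv
      have h2 : deriv^[2] (mg J) x = deriv (deriv (mg J)) x := rfl
      rw [h2, hEq.deriv_eq, (hasDerivAt_mg' J hx).deriv]
      exact mg''_pos hJ hx
  refine ⟨hconv.1, fun x hx y hy hxy a b ha hb hab => ?_⟩
  have hmem := hconv.1 hx hy ha.le hb.le hab
  have h2 := hconv.2 hx hy hxy ha hb hab
  simpa only [log_psi_eq J hx, log_psi_eq J hy, log_psi_eq J hmem] using h2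
end

section
/- For every integer J ≥ 2 and every θ > 0, κ(θ) > 0; that is, J e^{−θ}/(1 − e^{−θ}) > Σ_{j=1}^J j e^{−jθ}/(1 − e^{−jθ}). -/
/-- `κ(θ) = J e^{−θ}/(1 − e^{−θ}) − Σ_{j=1}^J j e^{−jθ}/(1 − e^{−jθ})`. -/
noncomputable def mallowsKappa (J : ℕ) (θ : ℝ) : ℝ :=
  (J : ℝ) * Real.exp (-θ) / (1 - Real.exp (-θ)) -
    ∑ j ∈ Finset.Icc 1 J, (j : ℝ) * Real.exp (-(j : ℝ) * θ) / (1 - Real.exp (-(j : ℝ) * θ))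

lemma geom_sum_ge {x : ℝ} (hx0 : 0 < x) (hx1 : x < 1) (j : ℕ) (hj : 1 ≤ j) :
    (j : ℝ) * x ^ (j - 1) ≤ ∑ i ∈ Finset.range j, x ^ i := by
  have : ∀ i ∈ Finset.range j, x ^ (j - 1) ≤ x ^ i := by
    intro i hi
    have := Finset.mem_range.mp hi
    exact pow_le_pow_of_le_one hx0.le hx1.le (by omega)
  calc (j : ℝ) * x ^ (j - 1) = ∑ _i ∈ Finset.range j, x ^ (j - 1) := by
        rw [Finset.sum_const, Finset.card_range, nsmul_eq_mul]
    _ ≤ ∑ i ∈ Finset.range j, x ^ i := Finset.sum_le_sum this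

lemma geom_sum_gt {x : ℝ} (hx0 : 0 < x) (hx1 : x < 1) (j : ℕ) (hj : 2 ≤ j) :
    (j : ℝ) * x ^ (j - 1) < ∑ i ∈ Finset.range j, x ^ i := by
  have h1 : ∀ i ∈ Finset.range j, x ^ (j - 1) ≤ x ^ i := by
    intro i hi
    have := Finset.mem_range.mp hi
    exact pow_le_pow_of_le_one hx0.le hx1.le (by omega)
  have h0 : (0 : ℕ) ∈ Finset.range j := Finset.mem_range.mpr (by omega)
  have hstrict : x ^ (j - 1) < x ^ 0 := by
    apply pow_lt_pow_right_of_lt_one₀ hx0 hx1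
    omega
  calc (j : ℝ) * x ^ (j - 1) = ∑ _i ∈ Finset.range j, x ^ (j - 1) := by
        rw [Finset.sum_const, Finset.card_range, nsmul_eq_mul]
    _ < ∑ i ∈ Finset.range j, x ^ i := Finset.sum_lt_sum h1 ⟨0, h0, hstrict⟩

lemma one_sub_pow_eq {x : ℝ} (j : ℕ) :
    1 - x ^ j = (1 - x) * ∑ i ∈ Finset.range j, x ^ i := by
  have := geom_sum_mul x j
  nlinarith [this]

lemma term_le {x : ℝ} (hx0 : 0 < x) (hx1 : x < 1) (j : ℕ) (hj : 1 ≤ j) :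
    (j : ℝ) * x ^ j / (1 - x ^ j) ≤ x / (1 - x) := by
  have hxj : x ^ j < 1 := pow_lt_one₀ hx0.le hx1 (by omega)
  have hd1 : (0:ℝ) < 1 - x ^ j := by linarith
  have hd2 : (0:ℝ) < 1 - x := by linarith
  rw [div_le_div_iff₀ hd1 hd2]
  rw [one_sub_pow_eq]
  have hS := geom_sum_ge hx0 hx1 j hj
  have hxp : x ^ j = x * x ^ (j - 1) := by
    rw [← pow_succ']
    congr 1
    omega
  calc (j:ℝ) * x ^ j * (1 - x) = x * (1 - x) * ((j:ℝ) * x ^ (j-1)) := by rw [hxp]; ring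
    _ ≤ x * (1 - x) * ∑ i ∈ Finset.range j, x ^ i := by
        apply mul_le_mul_of_nonneg_left hS (by positivity)
    _ = x * ((1 - x) * ∑ i ∈ Finset.range j, x ^ i) := by ring

lemma term_lt {x : ℝ} (hx0 : 0 < x) (hx1 : x < 1) (j : ℕ) (hj : 2 ≤ j) :
    (j : ℝ) * x ^ j / (1 - x ^ j) < x / (1 - x) := by
  have hxj : x ^ j < 1 := pow_lt_one₀ hx0.le hx1 (by omega)
  have hd1 : (0:ℝ) < 1 - x ^ j := by linarith
  have hd2 : (0:ℝ) < 1 - x := by linarith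
  rw [div_lt_div_iff₀ hd1 hd2]
  rw [one_sub_pow_eq]
  have hS := geom_sum_gt hx0 hx1 j hj
  have hxp : x ^ j = x * x ^ (j - 1) := by
    rw [← pow_succ']
    congr 1
    omega
  calc (j:ℝ) * x ^ j * (1 - x) = x * (1 - x) * ((j:ℝ) * x ^ (j-1)) := by rw [hxp]; ring
    _ < x * (1 - x) * ∑ i ∈ Finset.range j, x ^ i := by
        apply mul_lt_mul_of_pos_left hS (by positivity)
    _ = x * ((1 - x) * ∑ i ∈ Finset.range j, x ^ i) := by ring

theorem mallowsKappa_pos (J : ℕ) (hJ : 2 ≤ J) (θ : ℝ) (hθ : 0 < θ) :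
    0 < mallowsKappa J θ ∧
      ∑ j ∈ Finset.Icc 1 J, (j : ℝ) * Real.exp (-(j : ℝ) * θ) / (1 - Real.exp (-(j : ℝ) * θ)) <
        (J : ℝ) * Real.exp (-θ) / (1 - Real.exp (-θ)) := by
  set x := Real.exp (-θ) with hx
  have hx0 : 0 < x := Real.exp_pos _
  have hx1 : x < 1 := by
    rw [hx]
    exact Real.exp_lt_one_iff.mpr (by linarith)
  have hexp : ∀ j : ℕ, Real.exp (-(j : ℝ) * θ) = x ^ j := by
    intro j
    rw [hx, ← Real.exp_nat_mul]
    ring_nf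
  have key : ∑ j ∈ Finset.Icc 1 J, (j : ℝ) * Real.exp (-(j : ℝ) * θ) / (1 - Real.exp (-(j : ℝ) * θ))
      < (J : ℝ) * x / (1 - x) := by
    have hcard : (Finset.Icc 1 J).card = J := by
      rw [Nat.card_Icc]; omega
    have hsum : (J : ℝ) * x / (1 - x) = ∑ _j ∈ Finset.Icc 1 J, x / (1 - x) := by
      rw [Finset.sum_const, hcard, nsmul_eq_mul, mul_div_assoc]
    rw [hsum]
    apply Finset.sum_lt_sum
    · intro j hj
      rw [hexp j]
      exact term_le hx0 hx1 j (Finset.mem_Icc.mp hj).1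
    · refine ⟨2, Finset.mem_Icc.mpr ⟨by omega, hJ⟩, ?_⟩
      rw [hexp 2]
      exact_mod_cast term_lt hx0 hx1 2 le_rfl
  exact ⟨by rw [mallowsKappa]; linarith, key⟩
end

section
/- For every integer J ≥ 1 and every θ > 0, the expected Kendall tau distance under the Mallows model equals κ(θ): Σ_{σ ∈ Perm(Fin J)} inv(σ)·e^{−θ·inv(σ)} / Σ_{σ ∈ Perm(Fin J)} e^{−θ·inv(σ)} = J e^{−θ}/(1 − e^{−θ}) − Σ_{j=1}^J j e^{−jθ}/(1 − e^{−jθ}). -/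
open Finset

/-- The inversion number of a permutation `σ` of `Fin J`: the number of pairs `(i, k)`
with `i < k` and `σ i > σ k`. -/
def inversions {J : ℕ} (σ : Equiv.Perm (Fin J)) : ℕ :=
  (Finset.univ.filter (fun q : Fin J × Fin J => q.1 < q.2 ∧ σ q.2 < σ q.1)).card

lemma inversions_eq_sum {J : ℕ} (σ : Equiv.Perm (Fin J)) :
    inversions σ = ∑ i : Fin J, ∑ k : Fin J,
      if i < k ∧ σ k < σ i then 1 else 0 := by
  rw [inversions, Finset.card_filter, Fintype.sum_prod_type]

/-- Build a permutation of `Fin (n+1)` from its value at 0 and the order-pattern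
of the remaining values. -/
noncomputable def buildPerm {n : ℕ} (p : Fin (n + 1)) (τ : Equiv.Perm (Fin n)) : Equiv.Perm (Fin (n + 1)) :=
  Equiv.ofBijective (fun j => Fin.cases p (fun i => p.succAbove (τ i)) j) (by
    rw [← Finite.injective_iff_bijective]
    intro a b hab
    induction a using Fin.cases with
    | zero =>
      induction b using Fin.cases with
      | zero => rfl
      | succ i =>
        simp only [Fin.cases_zero, Fin.cases_succ] at hab
        exact absurd hab.symm (Fin.succAbove_ne p (τ i))
    | succ i =>
      induction b using Fin.cases with
      | zero =>
        simp only [Fin.cases_zero, Fin.cases_succ] at hab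
        exact absurd hab (Fin.succAbove_ne p (τ i))
      | succ k =>
        simp only [Fin.cases_succ] at hab
        rw [τ.injective (p.succAbove_right_injective hab)])

@[simp] lemma buildPerm_zero {n : ℕ} (p : Fin (n + 1)) (τ : Equiv.Perm (Fin n)) :
    buildPerm p τ 0 = p := rfl

@[simp] lemma buildPerm_succ {n : ℕ} (p : Fin (n + 1)) (τ : Equiv.Perm (Fin n)) (i : Fin n) :
    buildPerm p τ i.succ = p.succAbove (τ i) := rfl

lemma card_val_lt {n : ℕ} (p : Fin (n + 1)) :
    (∑ x : Fin n, if (x : ℕ) < (p : ℕ) then 1 else 0) = (p : ℕ) := by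
  rw [Fin.sum_univ_eq_sum_range (fun i => if i < (p : ℕ) then 1 else 0) n]
  have hfil : (range n).filter (fun i => i < (p : ℕ)) = range (p : ℕ) := by
    ext x
    simp only [Finset.mem_filter, Finset.mem_range]
    have := p.isLt
    omega
  calc ∑ i ∈ range n, (if i < (p : ℕ) then 1 else 0)
      = ((range n).filter (fun i => i < (p : ℕ))).card := by
        rw [Finset.card_filter]
    _ = (p : ℕ) := by rw [hfil, Finset.card_range]

lemma inversions_buildPerm {n : ℕ} (p : Fin (n + 1)) (τ : Equiv.Perm (Fin n)) :
    inversions (buildPerm p τ) = (p : ℕ) + inversions τ := by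
  rw [inversions_eq_sum, inversions_eq_sum, Fin.sum_univ_succ]
  congr 1
  · rw [Fin.sum_univ_succ]
    simp only [buildPerm_zero, buildPerm_succ, lt_self_iff_false, false_and, if_false, zero_add,
      Fin.succ_pos, true_and]
    have h1 : ∀ i : Fin n, p.succAbove (τ i) < p ↔ ((τ i : ℕ) < (p : ℕ)) := by
      intro i
      rw [Fin.succAbove_lt_iff_castSucc_lt, Fin.lt_def, Fin.coe_castSucc]
    simp only [h1]
    rw [Equiv.sum_comp τ (fun x => if (x : ℕ) < (p : ℕ) then 1 else 0)]
    exact card_val_lt p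
  · apply Finset.sum_congr rfl
    intro i _
    rw [Fin.sum_univ_succ]
    have h0 : ¬ (i.succ < (0 : Fin (n+1))) := by
      exact not_lt_of_ge (Fin.zero_le _)
    simp only [buildPerm_succ, h0, false_and, if_false, zero_add, Fin.succ_lt_succ_iff,
      Fin.succAbove_lt_succAbove_iff]

lemma sum_perm_succ {n : ℕ} (f : ℕ → ℝ) :
    ∑ σ : Equiv.Perm (Fin (n + 1)), f (inversions σ) =
      ∑ p : Fin (n + 1), ∑ τ : Equiv.Perm (Fin n), f ((p : ℕ) + inversions τ) := by
  have hbij : Function.Bijective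
      (fun x : Fin (n + 1) × Equiv.Perm (Fin n) => buildPerm x.1 x.2) := by
    rw [Fintype.bijective_iff_injective_and_card]
    constructor
    · rintro ⟨p, τ⟩ ⟨p', τ'⟩ hab
      simp only at hab
      have hp : p = p' := by
        have := congrArg (fun e : Equiv.Perm (Fin (n+1)) => e 0) hab
        simpa using this
      subst hp
      have hτ : τ = τ' := Equiv.ext fun i => p.succAbove_right_injective (by
        have := congrArg (fun e : Equiv.Perm (Fin (n+1)) => e i.succ) hab
        simpa using this)
      rw [hτ]
    · simp [Fintype.card_perm, Nat.factorial_succ]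
  calc ∑ σ : Equiv.Perm (Fin (n + 1)), f (inversions σ)
      = ∑ x : Fin (n + 1) × Equiv.Perm (Fin n), f ((x.1 : ℕ) + inversions x.2) :=
        (Fintype.sum_bijective _ hbij
          (fun x : Fin (n + 1) × Equiv.Perm (Fin n) => f ((x.1 : ℕ) + inversions x.2))
          (fun σ => f (inversions σ))
          (fun x => by simp [inversions_buildPerm])).symm
    _ = ∑ p : Fin (n + 1), ∑ τ : Equiv.Perm (Fin n), f ((p : ℕ) + inversions τ) :=
        Fintype.sum_prod_type _

lemma geom_weighted_sum (q : ℝ) (n : ℕ) :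
    (1 - q) ^ 2 * ∑ i ∈ range (n + 1), (i : ℝ) * q ^ i =
      q - ((n : ℝ) + 1) * q ^ (n + 1) + (n : ℝ) * q ^ (n + 2) := by
  induction n with
  | zero => simp
  | succ m ih =>
    rw [Finset.sum_range_succ, mul_add, ih]
    push_cast
    ring

lemma mean_step (q : ℝ) (h0 : 0 < q) (h1 : q < 1) (n : ℕ) :
    (∑ i ∈ range (n + 1), (i : ℝ) * q ^ i) / (∑ i ∈ range (n + 1), q ^ i) =
      q / (1 - q) - ((n : ℝ) + 1) * q ^ (n + 1) / (1 - q ^ (n + 1)) := by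
  have hq1 : (1 : ℝ) - q ≠ 0 := by nlinarith
  have hqn : q ^ (n + 1) < 1 := pow_lt_one₀ h0.le h1 (Nat.succ_ne_zero n)
  have hqn0 : 0 < q ^ (n + 1) := pow_pos h0 _
  have hqn' : (1 : ℝ) - q ^ (n + 1) ≠ 0 := by nlinarith
  have hA : ∑ i ∈ range (n + 1), q ^ i = (1 - q ^ (n + 1)) / (1 - q) := by
    rw [eq_div_iff hq1]
    linear_combination - geom_sum_mul q (n + 1)
  have hB : ∑ i ∈ range (n + 1), (i : ℝ) * q ^ i =
      (q - ((n : ℝ) + 1) * q ^ (n + 1) + (n : ℝ) * q ^ (n + 2)) / (1 - q) ^ 2 := by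
    have := geom_weighted_sum q n
    field_simp
    linarith [this]
  rw [hA, hB]
  field_simp
  ring

lemma perm_sum_pos {J : ℕ} (q : ℝ) (h0 : 0 < q) :
    0 < ∑ σ : Equiv.Perm (Fin J), q ^ (inversions σ) := by
  apply Finset.sum_pos
  · intro σ _
    exact pow_pos h0 _
  · exact Finset.univ_nonempty

lemma main_q (q : ℝ) (h0 : 0 < q) (h1 : q < 1) (J : ℕ) :
    (∑ σ : Equiv.Perm (Fin J), (inversions σ : ℝ) * q ^ (inversions σ)) /
        (∑ σ : Equiv.Perm (Fin J), q ^ (inversions σ)) =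
      (J : ℝ) * q / (1 - q) - ∑ j ∈ Finset.Icc 1 J, (j : ℝ) * q ^ j / (1 - q ^ j) := by
  induction J with
  | zero => simp [inversions]
  | succ n ih =>
    have hW : ∑ σ : Equiv.Perm (Fin (n + 1)), (inversions σ : ℝ) * q ^ (inversions σ) =
        (∑ i ∈ range (n + 1), (i : ℝ) * q ^ i) * (∑ τ : Equiv.Perm (Fin n), q ^ (inversions τ))
        + (∑ i ∈ range (n + 1), q ^ i) *
          (∑ τ : Equiv.Perm (Fin n), (inversions τ : ℝ) * q ^ (inversions τ)) := by
      rw [sum_perm_succ (fun m => (m : ℝ) * q ^ m)]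
      rw [← Fin.sum_univ_eq_sum_range (fun i => (i : ℝ) * q ^ i) (n + 1),
        ← Fin.sum_univ_eq_sum_range (fun i => q ^ i) (n + 1)]
      rw [Finset.sum_mul, Finset.sum_mul, ← Finset.sum_add_distrib]
      apply Finset.sum_congr rfl
      intro p _
      rw [Finset.mul_sum, Finset.mul_sum, ← Finset.sum_add_distrib]
      apply Finset.sum_congr rfl
      intro τ _
      push_cast
      rw [pow_add]
      ring
    have hZ : ∑ σ : Equiv.Perm (Fin (n + 1)), q ^ (inversions σ) =
        (∑ i ∈ range (n + 1), q ^ i) * (∑ τ : Equiv.Perm (Fin n), q ^ (inversions τ)) := by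
      rw [sum_perm_succ (fun m => q ^ m)]
      rw [← Fin.sum_univ_eq_sum_range (fun i => q ^ i) (n + 1)]
      rw [Finset.sum_mul]
      apply Finset.sum_congr rfl
      intro p _
      rw [Finset.mul_sum]
      apply Finset.sum_congr rfl
      intro τ _
      rw [pow_add]
    have hZn := perm_sum_pos (J := n) q h0
    have hAn : 0 < ∑ i ∈ range (n + 1), q ^ i :=
      Finset.sum_pos (fun i _ => pow_pos h0 _) (by simp)
    rw [hW, hZ]
    have key : ((∑ i ∈ range (n + 1), (i : ℝ) * q ^ i) *
          (∑ τ : Equiv.Perm (Fin n), q ^ (inversions τ))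
        + (∑ i ∈ range (n + 1), q ^ i) *
          (∑ τ : Equiv.Perm (Fin n), (inversions τ : ℝ) * q ^ (inversions τ))) /
        ((∑ i ∈ range (n + 1), q ^ i) * (∑ τ : Equiv.Perm (Fin n), q ^ (inversions τ))) =
        (∑ i ∈ range (n + 1), (i : ℝ) * q ^ i) / (∑ i ∈ range (n + 1), q ^ i)
        + (∑ τ : Equiv.Perm (Fin n), (inversions τ : ℝ) * q ^ (inversions τ)) /
          (∑ τ : Equiv.Perm (Fin n), q ^ (inversions τ)) := by
      field_simp
    rw [key, mean_step q h0 h1 n, ih]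
    rw [Finset.sum_Icc_succ_top (Nat.le_add_left 1 n)]
    push_cast
    ring

theorem mallows_mean_kendall_distance (J : ℕ) (hJ : 1 ≤ J) (θ : ℝ) (hθ : 0 < θ) :
    (∑ σ : Equiv.Perm (Fin J), (inversions σ : ℝ) * Real.exp (-θ * inversions σ)) /
        (∑ σ : Equiv.Perm (Fin J), Real.exp (-θ * inversions σ)) =
      (J : ℝ) * Real.exp (-θ) / (1 - Real.exp (-θ)) -
        ∑ j ∈ Finset.Icc 1 J, (j : ℝ) * Real.exp (-(j : ℝ) * θ) / (1 - Real.exp (-(j : ℝ) * θ)) := by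
  have hq0 : 0 < Real.exp (-θ) := Real.exp_pos _
  have hq1 : Real.exp (-θ) < 1 := Real.exp_lt_one_iff.mpr (by linarith)
  have hexp : ∀ k : ℕ, Real.exp (-θ * k) = Real.exp (-θ) ^ k := by
    intro k
    rw [mul_comm, Real.exp_nat_mul]
  have hexp' : ∀ j : ℕ, Real.exp (-(j : ℝ) * θ) = Real.exp (-θ) ^ j := by
    intro j
    rw [show -(j : ℝ) * θ = (j : ℝ) * (-θ) by ring, Real.exp_nat_mul]
  simp only [hexp, hexp']
  exact main_q (Real.exp (-θ)) hq0 hq1 J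
end

section
/- For every integer J ≥ 1 and every θ > 0, the variance of the Kendall tau distance under the Mallows model satisfies Σ_{σ ∈ Perm(Fin J)} inv(σ)²·e^{−θ·inv(σ)} / Σ_{σ ∈ Perm(Fin J)} e^{−θ·inv(σ)} − (Σ_{σ ∈ Perm(Fin J)} inv(σ)·e^{−θ·inv(σ)} / Σ_{σ ∈ Perm(Fin J)} e^{−θ·inv(σ)})² = J e^{−θ}/(1 − e^{−θ})² − Σ_{j=1}^J j² e^{−jθ}/(1 − e^{−jθ})². -/
open Finset Equiv

namespace MallowsAux

/-- Glue `p : Fin (n+1)` and `τ : Perm (Fin n)` into a permutation of `Fin (n+1)`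
sending `0 ↦ p` and `i.succ ↦ p.succAbove (τ i)`. -/
def mk {n : ℕ} (p : Fin (n + 1)) (τ : Perm (Fin n)) : Perm (Fin (n + 1)) :=
  (finSuccEquiv n).trans ((τ.optionCongr).trans (finSuccEquiv' p).symm)

@[simp] lemma mk_zero {n : ℕ} (p : Fin (n + 1)) (τ : Perm (Fin n)) : mk p τ 0 = p := by
  simp [mk]

@[simp] lemma mk_succ {n : ℕ} (p : Fin (n + 1)) (τ : Perm (Fin n)) (i : Fin n) :
    mk p τ i.succ = p.succAbove (τ i) := by
  simp [mk]

lemma mk_bijective {n : ℕ} :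
    Function.Bijective (fun pt : Fin (n + 1) × Perm (Fin n) => mk pt.1 pt.2) := by
  rw [Fintype.bijective_iff_injective_and_card]
  constructor
  · rintro ⟨p, τ⟩ ⟨p', τ'⟩ h
    simp only at h
    have hp : p = p' := by
      have := congrArg (fun σ : Perm (Fin (n+1)) => σ 0) h
      simpa using this
    subst hp
    have hτ : ∀ i, τ i = τ' i := by
      intro i
      have := congrArg (fun σ : Perm (Fin (n+1)) => σ i.succ) h
      simp only [mk_succ] at this
      exact Fin.succAbove_right_injective this
    simp [Prod.ext_iff, Equiv.ext_iff, hτ]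
  · simp [Fintype.card_perm, Nat.factorial_succ]

lemma card_filter_lt {n : ℕ} (p : Fin (n + 1)) :
    (univ.filter fun m : Fin n => (m : ℕ) < (p : ℕ)).card = (p : ℕ) := by
  have : (univ.filter fun m : Fin n => (m : ℕ) < (p : ℕ)) =
      (Finset.range (p : ℕ)).attachFin (fun m hm => lt_of_lt_of_le (Finset.mem_range.mp hm)
        (Nat.lt_succ_iff.mp p.isLt)) := by
    ext m
    simp [Finset.mem_attachFin]
  rw [this, Finset.card_attachFin, Finset.card_range]

lemma inversions_eq_sum {J : ℕ} (σ : Perm (Fin J)) :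
    inversions σ = ∑ i : Fin J, ∑ k : Fin J, if i < k ∧ σ k < σ i then 1 else 0 := by
  rw [inversions, Finset.card_filter]
  exact Fintype.sum_prod_type _

lemma inversions_mk {n : ℕ} (p : Fin (n + 1)) (τ : Perm (Fin n)) :
    inversions (mk p τ) = (p : ℕ) + inversions τ := by
  rw [inversions_eq_sum, inversions_eq_sum]
  rw [Fin.sum_univ_succ]
  congr 1
  · -- pairs (0, k)
    rw [Fin.sum_univ_succ]
    have h0 : ((if (0:Fin (n+1)) < 0 ∧ mk p τ 0 < mk p τ 0 then 1 else 0) : ℕ) = 0 := by simp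
    rw [h0, zero_add]
    have : ∀ j : Fin n, ((if (0:Fin (n+1)) < j.succ ∧ mk p τ j.succ < mk p τ 0 then 1 else 0) : ℕ)
        = if (τ j : ℕ) < (p : ℕ) then 1 else 0 := by
      intro j
      simp only [mk_zero, mk_succ]
      congr 1
      simp only [eq_iff_iff]
      constructor
      · rintro ⟨-, h⟩
        rw [Fin.succAbove_lt_iff_castSucc_lt] at h
        exact h
      · intro h
        exact ⟨Fin.succ_pos j, (Fin.succAbove_lt_iff_castSucc_lt p (τ j)).mpr h⟩
    rw [Finset.sum_congr rfl fun j _ => this j]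
    rw [Equiv.sum_comp τ (fun m : Fin n => if (m : ℕ) < (p : ℕ) then 1 else 0)]
    rw [← Finset.card_filter]
    exact card_filter_lt p
  · -- pairs (i.succ, k)
    refine Finset.sum_congr rfl fun i _ => ?_
    rw [Fin.sum_univ_succ]
    have h0 : ((if i.succ < 0 ∧ mk p τ 0 < mk p τ i.succ then 1 else 0) : ℕ) = 0 := by
      simp [Fin.not_lt_zero]
    rw [h0, zero_add]
    refine Finset.sum_congr rfl fun j _ => ?_
    congr 1
    simp only [mk_succ, eq_iff_iff, Fin.succ_lt_succ_iff, Fin.succAbove_lt_succAbove_iff]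

end MallowsAux

namespace MallowsAux

noncomputable def ga (x : ℝ) (m : ℕ) : ℝ := ∑ p ∈ range m, x ^ p
noncomputable def gb (x : ℝ) (m : ℕ) : ℝ := ∑ p ∈ range m, (p : ℝ) * x ^ p
noncomputable def gc (x : ℝ) (m : ℕ) : ℝ := ∑ p ∈ range m, (p : ℝ) ^ 2 * x ^ p

lemma ga_mul (x : ℝ) (m : ℕ) : ga x m * (1 - x) = 1 - x ^ m := by
  have h := geom_sum_mul x m
  simp only [ga]
  linear_combination -h

lemma gb_mul (x : ℝ) (m : ℕ) :
    gb x m * (1 - x) ^ 2 = x - (m : ℝ) * x ^ m + ((m : ℝ) - 1) * x ^ (m + 1) := by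
  induction m with
  | zero => simp [gb]
  | succ k ih =>
    simp only [gb, Finset.sum_range_succ] at ih ⊢
    push_cast
    linear_combination ih

lemma gE (x : ℝ) (m : ℕ) :
    (1 - x) ^ 2 * (gc x m + (m : ℝ) ^ 2 * ga x m - 2 * (m : ℝ) * gb x m) =
      2 * ga x m * x + x ^ (m + 1) - ((m : ℝ) + 1) ^ 2 * x + (m : ℝ) ^ 2 := by
  induction m with
  | zero => simp [ga, gb, gc]
  | succ k ih =>
    have ha := ga_mul x k
    have hb := gb_mul x k
    simp only [ga, gb, gc, Finset.sum_range_succ] at ih ha hb ⊢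
    push_cast at ih ha hb ⊢
    linear_combination ih + ((2 * (k : ℝ) + 1) * (1 - x)) * ha - 2 * hb

lemma gP (x : ℝ) (m : ℕ) :
    (1 - x) ^ 2 * (gc x m * ga x m - gb x m ^ 2) =
      ga x m ^ 2 * x - (m : ℝ) ^ 2 * x ^ m := by
  induction m with
  | zero => simp [ga, gb, gc]
  | succ k ih =>
    have hE := gE x k
    simp only [ga, gb, gc, Finset.sum_range_succ] at ih hE ⊢
    push_cast at ih hE ⊢
    linear_combination ih + x ^ k * hE

lemma key {x : ℝ} (hx0 : 0 < x) (hx1 : x < 1) (m : ℕ) (hm : 1 ≤ m) :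
    gc x m * ga x m - gb x m ^ 2 =
      ga x m ^ 2 * (x / (1 - x) ^ 2 - (m : ℝ) ^ 2 * x ^ m / (1 - x ^ m) ^ 2) := by
  have h1 : (1 : ℝ) - x ≠ 0 := by nlinarith
  have hxm : x ^ m < 1 := pow_lt_one₀ hx0.le hx1 (by omega)
  have h2 : (1 : ℝ) - x ^ m ≠ 0 := by nlinarith
  have hga := ga_mul x m
  have hgP := gP x m
  field_simp
  linear_combination (1 - x ^ m) ^ 2 * hgP +
    (m : ℝ) ^ 2 * x ^ m * (ga x m * (1 - x) + (1 - x ^ m)) * hga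

end MallowsAux

namespace MallowsAux

noncomputable def Z (x : ℝ) (n : ℕ) : ℝ := ∑ σ : Perm (Fin n), x ^ inversions σ
noncomputable def S1 (x : ℝ) (n : ℕ) : ℝ :=
  ∑ σ : Perm (Fin n), (inversions σ : ℝ) * x ^ inversions σ
noncomputable def S2 (x : ℝ) (n : ℕ) : ℝ :=
  ∑ σ : Perm (Fin n), (inversions σ : ℝ) ^ 2 * x ^ inversions σ

lemma sum_perm_succ {n : ℕ} (F : ℕ → ℝ) :
    ∑ σ : Perm (Fin (n + 1)), F (inversions σ) =
      ∑ p : Fin (n + 1), ∑ τ : Perm (Fin n), F ((p : ℕ) + inversions τ) := by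
  have h1 : ∑ pt : Fin (n + 1) × Perm (Fin n), F ((pt.1 : ℕ) + inversions pt.2) =
      ∑ σ : Perm (Fin (n + 1)), F (inversions σ) :=
    Fintype.sum_bijective _ mk_bijective _ _ (fun pt => by rw [inversions_mk])
  rw [← h1]
  exact Fintype.sum_prod_type _

lemma inversions_zero (σ : Perm (Fin 0)) : inversions σ = 0 := by
  simp [inversions]

lemma Z_zero (x : ℝ) : Z x 0 = 1 := by
  simp [Z, inversions_zero]

lemma S1_zero (x : ℝ) : S1 x 0 = 0 := by
  simp [S1, inversions_zero]

lemma S2_zero (x : ℝ) : S2 x 0 = 0 := by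
  simp [S2, inversions_zero]

lemma Z_succ (x : ℝ) (n : ℕ) : Z x (n + 1) = ga x (n + 1) * Z x n := by
  rw [Z, sum_perm_succ (fun k => x ^ k)]
  have : ∀ p : Fin (n + 1),
      (∑ τ : Perm (Fin n), x ^ ((p : ℕ) + inversions τ)) = x ^ (p : ℕ) * Z x n := by
    intro p
    rw [Z, Finset.mul_sum]
    exact Finset.sum_congr rfl fun τ _ => by rw [pow_add]
  rw [Finset.sum_congr rfl fun p _ => this p, ← Finset.sum_mul, ga,
    Fin.sum_univ_eq_sum_range (fun k => x ^ k) (n + 1)]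

lemma S1_succ (x : ℝ) (n : ℕ) :
    S1 x (n + 1) = gb x (n + 1) * Z x n + ga x (n + 1) * S1 x n := by
  rw [S1, sum_perm_succ (fun k => (k : ℝ) * x ^ k)]
  have : ∀ p : Fin (n + 1),
      (∑ τ : Perm (Fin n), (((p : ℕ) + inversions τ : ℕ) : ℝ) * x ^ ((p : ℕ) + inversions τ))
        = (p : ℝ) * x ^ (p : ℕ) * Z x n + x ^ (p : ℕ) * S1 x n := by
    intro p
    rw [Z, S1, Finset.mul_sum, Finset.mul_sum, ← Finset.sum_add_distrib]
    refine Finset.sum_congr rfl fun τ _ => ?_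
    push_cast [pow_add]
    ring
  rw [Finset.sum_congr rfl fun p _ => this p, Finset.sum_add_distrib, ← Finset.sum_mul,
    ← Finset.sum_mul, gb, ga, Fin.sum_univ_eq_sum_range (fun k => (k : ℝ) * x ^ k) (n + 1),
    Fin.sum_univ_eq_sum_range (fun k => x ^ k) (n + 1)]

lemma S2_succ (x : ℝ) (n : ℕ) :
    S2 x (n + 1) = gc x (n + 1) * Z x n + 2 * gb x (n + 1) * S1 x n + ga x (n + 1) * S2 x n := by
  rw [S2, sum_perm_succ (fun k => (k : ℝ) ^ 2 * x ^ k)]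
  have : ∀ p : Fin (n + 1),
      (∑ τ : Perm (Fin n), (((p : ℕ) + inversions τ : ℕ) : ℝ) ^ 2 * x ^ ((p : ℕ) + inversions τ))
        = (p : ℝ) ^ 2 * x ^ (p : ℕ) * Z x n + 2 * ((p : ℝ) * x ^ (p : ℕ)) * S1 x n
          + x ^ (p : ℕ) * S2 x n := by
    intro p
    rw [Z, S1, S2, Finset.mul_sum, Finset.mul_sum, Finset.mul_sum, ← Finset.sum_add_distrib,
      ← Finset.sum_add_distrib]
    refine Finset.sum_congr rfl fun τ _ => ?_
    push_cast [pow_add]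
    ring
  rw [Finset.sum_congr rfl fun p _ => this p, Finset.sum_add_distrib, Finset.sum_add_distrib,
    ← Finset.sum_mul, ← Finset.sum_mul, ← Finset.sum_mul, ← Finset.mul_sum, gb, ga, gc,
    Fin.sum_univ_eq_sum_range (fun k => (k : ℝ) ^ 2 * x ^ k) (n + 1),
    Fin.sum_univ_eq_sum_range (fun k => (k : ℝ) * x ^ k) (n + 1),
    Fin.sum_univ_eq_sum_range (fun k => x ^ k) (n + 1)]

lemma var_eq {x : ℝ} (hx0 : 0 < x) (hx1 : x < 1) (n : ℕ) :
    S2 x n * Z x n - S1 x n ^ 2 =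
      Z x n ^ 2 * ∑ j ∈ Finset.Icc 1 n,
        (x / (1 - x) ^ 2 - (j : ℝ) ^ 2 * x ^ j / (1 - x ^ j) ^ 2) := by
  induction n with
  | zero => rw [S1_zero, S2_zero, Finset.Icc_eq_empty (by omega)]; simp
  | succ k ih =>
    have hkey := key hx0 hx1 (k + 1) (by omega)
    rw [Z_succ, S1_succ, S2_succ, Finset.sum_Icc_succ_top (by omega : 1 ≤ k + 1)]
    linear_combination (Z x k) ^ 2 * hkey + (ga x (k + 1)) ^ 2 * ih

end MallowsAux

namespace MallowsAux

lemma main {x : ℝ} (hx0 : 0 < x) (hx1 : x < 1) (n : ℕ) :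
    S2 x n / Z x n - (S1 x n / Z x n) ^ 2 =
      (n : ℝ) * x / (1 - x) ^ 2 -
        ∑ j ∈ Finset.Icc 1 n, (j : ℝ) ^ 2 * x ^ j / (1 - x ^ j) ^ 2 := by
  have hZ : 0 < Z x n := Finset.sum_pos (fun σ _ => pow_pos hx0 _) Finset.univ_nonempty
  have hsplit : ∑ j ∈ Finset.Icc 1 n,
      (x / (1 - x) ^ 2 - (j : ℝ) ^ 2 * x ^ j / (1 - x ^ j) ^ 2) =
      (n : ℝ) * x / (1 - x) ^ 2 -
        ∑ j ∈ Finset.Icc 1 n, (j : ℝ) ^ 2 * x ^ j / (1 - x ^ j) ^ 2 := by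
    rw [Finset.sum_sub_distrib, Finset.sum_const, Nat.card_Icc, nsmul_eq_mul]
    push_cast [Nat.add_sub_cancel]
    ring
  rw [← hsplit]
  have hZne : Z x n ≠ 0 := hZ.ne'
  have h2 : S2 x n / Z x n - (S1 x n / Z x n) ^ 2 =
      (S2 x n * Z x n - S1 x n ^ 2) / Z x n ^ 2 := by
    field_simp
  rw [h2, var_eq hx0 hx1 n]
  exact mul_div_cancel_left₀ _ (pow_ne_zero 2 hZne)

end MallowsAux

theorem mallows_variance_kendall_distance (J : ℕ) (hJ : 1 ≤ J) (θ : ℝ) (hθ : 0 < θ) :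
    (∑ σ : Equiv.Perm (Fin J), (inversions σ : ℝ) ^ 2 * Real.exp (-θ * inversions σ)) /
          (∑ σ : Equiv.Perm (Fin J), Real.exp (-θ * inversions σ)) -
        ((∑ σ : Equiv.Perm (Fin J), (inversions σ : ℝ) * Real.exp (-θ * inversions σ)) /
          (∑ σ : Equiv.Perm (Fin J), Real.exp (-θ * inversions σ))) ^ 2 =
      (J : ℝ) * Real.exp (-θ) / (1 - Real.exp (-θ)) ^ 2 -
        ∑ j ∈ Finset.Icc 1 J,
          (j : ℝ) ^ 2 * Real.exp (-(j : ℝ) * θ) / (1 - Real.exp (-(j : ℝ) * θ)) ^ 2 := by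
  set x := Real.exp (-θ) with hx
  have hx0 : 0 < x := Real.exp_pos _
  have hx1 : x < 1 := Real.exp_lt_one_iff.mpr (by linarith)
  have hterm : ∀ k : ℕ, Real.exp (-θ * k) = x ^ k := by
    intro k
    rw [hx, ← Real.exp_nat_mul, mul_comm]
  have hterm2 : ∀ j : ℕ, Real.exp (-(j : ℝ) * θ) = x ^ j := by
    intro j
    rw [hx, ← Real.exp_nat_mul]
    congr 1
    ring
  simp only [hterm, hterm2]
  exact MallowsAux.main hx0 hx1 J
end
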